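/- For every integer ℓ ≥ 1, the three graphs 𝒮_{8ℓ+7}, ℛ_{2ℓ+7} ∪ 3ℓ·K₂ (the disjoint union of ℛ_{2ℓ+7} with 3ℓ copies of K₂), and 𝒬_{2ℓ+7} ∪ 3ℓ·K₂ are pairwise cospectral (their adjacency matrices have equal characteristic polynomials), and neither of the latter two graphs is isomorphic to 𝒮_{8ℓ+7}. -/

import Mathlib

open Polynomial
open scoped Classical

/-- The adjacency matrix (over `ℝ`) of a finite simple graph. -/
noncomputable def adjMat {V : Type*} [Fintype V] (G : SimpleGraph V) : Matrix V V ℝ :=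
  Matrix.of fun i j => if G.Adj i j then 1 else 0

/-- The bipartite graph with "bipartite adjacency relation" `P`: vertex set `α ⊕ β`, with
`Sum.inl i` adjacent to `Sum.inr j` iff `P i j`. -/
def bipGraph {α β : Type*} (P : α → β → Prop) : SimpleGraph (α ⊕ β) :=
  SimpleGraph.fromRel fun x y => ∃ i j, x = Sum.inl i ∧ y = Sum.inr j ∧ P i j

/-- `𝒮_{2k+1}`, the subdivision of the star `K_{1,k}`. -/
def starSubdiv (k : ℕ) : SimpleGraph (Unit ⊕ (Fin k ⊕ Fin k)) :=
  SimpleGraph.fromRel fun x y =>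
    (∃ i : Fin k, x = Sum.inl () ∧ y = Sum.inr (Sum.inl i)) ∨
    (∃ i : Fin k, x = Sum.inr (Sum.inl i) ∧ y = Sum.inr (Sum.inr i))

/-- `ℛ_{2k+1}` (for `k ≥ 3`): bipartite adjacency matrix `[[I_{k−3}, J], [O, Ĩ₃]]`. -/
def Rgraph (k : ℕ) : SimpleGraph (Fin k ⊕ Fin (k + 1)) :=
  bipGraph fun (i : Fin k) (j : Fin (k + 1)) =>
    (i.1 < k - 3 ∧ ((j.1 : ℕ) = i.1 ∨ k - 3 ≤ j.1)) ∨
    (k - 3 ≤ i.1 ∧ ((j.1 : ℕ) = i.1 ∨ j.1 = k))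

/-- `𝒬_{2k+1}` (for `k ≥ 3`): bipartite adjacency matrix `[[Ĩ_{k−3}, J], [O, J₃ − I₃]]`. -/
def Qgraph (k : ℕ) : SimpleGraph (Fin k ⊕ Fin (k + 1)) :=
  bipGraph fun (i : Fin k) (j : Fin (k + 1)) =>
    (i.1 < k - 3 ∧ ((j.1 : ℕ) = i.1 ∨ k - 3 ≤ j.1)) ∨
    (k - 3 ≤ i.1 ∧ k - 2 ≤ j.1 ∧ j.1 - (k - 2) ≠ i.1 - (k - 3))

/-- `m · K₂`: the disjoint union of `m` copies of the complete graph `K₂`; the two vertices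
`(a, 0)` and `(a, 1)` of the `a`-th copy are adjacent. -/
def copiesK2 (m : ℕ) : SimpleGraph (Fin m × Fin 2) :=
  SimpleGraph.fromRel fun x y => x.1 = y.1

section Aux

open Matrix

set_option maxHeartbeats 1000000
set_option synthInstance.maxHeartbeats 1000000

/-! ### The key characteristic polynomial computation -/

lemma bip_charpoly {p q : Type*} [Fintype p] [Fintype q] [DecidableEq p] [DecidableEq q]
    (N : Matrix p q ℝ) (u : p → ℝ) (h : N * Nᵀ = 1 + Matrix.vecMulVec u u)
    (m : ℕ) (hp : Fintype.card p = m + 1) (hq : Fintype.card q = m + 2) :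
    (Matrix.fromBlocks 0 N Nᵀ (0 : Matrix q q ℝ)).charpoly =
      X * (X ^ 2 - 1) ^ m * (X ^ 2 - 1 - C (u ⬝ᵥ u)) := by
  apply RatFunc.algebraMap_injective ℝ
  set φ : ℝ[X] →+* RatFunc ℝ := algebraMap ℝ[X] (RatFunc ℝ) with hφ
  set ψ : ℝ →+* RatFunc ℝ := φ.comp Polynomial.C with hψ
  set x : RatFunc ℝ := φ X with hx
  have hx0 : x ≠ 0 := RatFunc.algebraMap_ne_zero Polynomial.X_ne_zero
  have hx2 : x ^ 2 - 1 ≠ 0 := by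
    have : φ (X ^ 2 - 1) ≠ 0 := RatFunc.algebraMap_ne_zero (by
      intro hcon
      have := congrArg (Polynomial.eval 0) hcon
      simp at this)
    simpa [map_sub, map_pow] using this
  have hxc : x ^ 2 - 1 = x * (x - x⁻¹) := by
    rw [mul_sub, mul_inv_cancel₀ hx0]; ring
  have hc0 : x - x⁻¹ ≠ 0 := by
    intro h0
    apply hx2
    rw [hxc, h0, mul_zero]
  have hy : x * x⁻¹ = 1 := mul_inv_cancel₀ hx0
  have hd : (x - x⁻¹) * (x - x⁻¹)⁻¹ = 1 := mul_inv_cancel₀ hc0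
  set u' : p → RatFunc ℝ := fun i => ψ (u i) with hu'
  set s : RatFunc ℝ := u' ⬝ᵥ u' with hs
  have hsψ : s = ψ (u ⬝ᵥ u) := by
    simp [hs, dotProduct, hu', map_sum]
  -- the charmatrix, mapped into RatFunc ℝ
  have hcm : (charmatrix (Matrix.fromBlocks 0 N Nᵀ (0 : Matrix q q ℝ))).map φ
      = Matrix.fromBlocks (x • (1 : Matrix p p (RatFunc ℝ))) (-(N.map ψ)) (-(Nᵀ.map ψ))
          (x • (1 : Matrix q q (RatFunc ℝ))) := by
    rw [charmatrix_fromBlocks]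
    ext (i | i) (j | j) <;>
      simp [charmatrix_apply, Matrix.map_apply, Matrix.diagonal_apply, Matrix.one_apply,
        apply_ite φ, hψ, hx, smul_eq_mul, mul_ite, mul_one, mul_zero]
  have hdet : φ ((Matrix.fromBlocks 0 N Nᵀ (0 : Matrix q q ℝ)).charpoly)
      = ((Matrix.fromBlocks (x • (1 : Matrix p p (RatFunc ℝ))) (-(N.map ψ)) (-(Nᵀ.map ψ))
          (x • (1 : Matrix q q (RatFunc ℝ))))).det := by
    rw [Matrix.charpoly, RingHom.map_det, RingHom.mapMatrix_apply, hcm]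
  rw [hdet]
  -- invertibility of the bottom-right block
  have hDinv : (x • (1 : Matrix q q (RatFunc ℝ))) * (x⁻¹ • 1) = 1 := by
    rw [Matrix.smul_mul, Matrix.mul_smul, smul_smul, mul_inv_cancel₀ hx0, Matrix.mul_one, one_smul]
  letI : Invertible (x • (1 : Matrix q q (RatFunc ℝ))) :=
    ⟨x⁻¹ • 1, by rw [Matrix.smul_mul, Matrix.mul_smul, smul_smul, inv_mul_cancel₀ hx0,
      Matrix.mul_one, one_smul], hDinv⟩
  rw [Matrix.det_fromBlocks₂₂]
  have hinv : ⅟(x • (1 : Matrix q q (RatFunc ℝ))) = (x⁻¹ • 1 : Matrix q q (RatFunc ℝ)) := rfl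
  rw [hinv]
  -- the product of the mapped matrices
  have hNN : (N.map ψ) * ((Nᵀ).map ψ) = 1 + vecMulVec u' u' := by
    rw [← Matrix.map_mul, h]
    ext i j
    simp [Matrix.map_apply, Matrix.one_apply, vecMulVec_apply, apply_ite ψ, hu']
  -- the Schur complement
  have hschur : x • (1 : Matrix p p (RatFunc ℝ)) -
        (-(N.map ψ)) * (x⁻¹ • (1 : Matrix q q (RatFunc ℝ))) * (-(Nᵀ.map ψ))
      = (x - x⁻¹) • ((1 : Matrix p p (RatFunc ℝ)) +
        Matrix.replicateCol Unit ((-(x⁻¹ * (x - x⁻¹)⁻¹)) • u') * Matrix.replicateRow Unit u') := by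
    simp only [Matrix.neg_mul, Matrix.mul_neg, neg_neg]
    rw [Matrix.mul_smul, Matrix.mul_one, Matrix.smul_mul, hNN, ← vecMulVec_eq (ι := Unit)]
    ext i j
    simp only [Matrix.sub_apply, Matrix.smul_apply, Matrix.add_apply, Matrix.one_apply,
      vecMulVec_apply, smul_eq_mul, Pi.smul_apply]
    split_ifs <;> linear_combination (x⁻¹ * u' i * u' j) * hd
  rw [hschur]
  rw [Matrix.det_smul, Matrix.det_smul, Matrix.det_one, Matrix.det_one_add_replicateCol_mul_replicateRow,
    hp, hq]
  have hdot : u' ⬝ᵥ ((-(x⁻¹ * (x - x⁻¹)⁻¹)) • u') = -(x⁻¹ * (x - x⁻¹)⁻¹) * s := by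
    rw [dotProduct_smul, smul_eq_mul, ← hs]
  rw [hdot]
  -- right-hand side
  rw [_root_.map_mul, _root_.map_mul, map_pow, map_sub, map_sub, map_sub, map_pow,
    _root_.map_one]
  have hCs : φ (C (u ⬝ᵥ u)) = s := by rw [hsψ, hψ]; rfl
  rw [hCs, ← hx, hxc]
  set y := x⁻¹ with hyv
  set d := (x - y)⁻¹ with hdv
  have hy2 : x * y = 1 := mul_inv_cancel₀ hx0
  have hd2 : (x - y) * d = 1 := mul_inv_cancel₀ hc0
  rw [mul_pow]
  linear_combination (-(x^(m+1) * (x - y)^m * s * ((x - y) * d))) * hy2 +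
    (-(x^(m+1) * (x - y)^m * s)) * hd2

/-! ### indicator sums -/

lemma sum_ind (n c₁ c₂ : ℕ) :
    (∑ j ∈ Finset.range n, if j = c₁ ∧ j = c₂ then (1:ℝ) else 0)
      = if c₁ = c₂ ∧ c₁ < n then 1 else 0 := by
  by_cases h : c₁ = c₂
  · subst h
    simp [Finset.sum_ite_eq', Finset.mem_range, and_self]
  · rw [Finset.sum_eq_zero, if_neg (by tauto)]
    intro j _
    rw [if_neg (by rintro ⟨rfl, rfl⟩; exact h rfl)]

/-! ### the bipartite halves of `ℛ` and `𝒬` -/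

noncomputable def BR (l : ℕ) : Matrix (Fin (l+3)) (Fin (l+3+1)) ℝ :=
  Matrix.of fun i j =>
    if (i.1 < l + 3 - 3 ∧ ((j.1 : ℕ) = i.1 ∨ l + 3 - 3 ≤ j.1)) ∨
       (l + 3 - 3 ≤ i.1 ∧ ((j.1 : ℕ) = i.1 ∨ j.1 = l + 3)) then 1 else 0

noncomputable def BQ (l : ℕ) : Matrix (Fin (l+3)) (Fin (l+3+1)) ℝ :=
  Matrix.of fun i j =>
    if (i.1 < l + 3 - 3 ∧ ((j.1 : ℕ) = i.1 ∨ l + 3 - 3 ≤ j.1)) ∨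
       (l + 3 - 3 ≤ i.1 ∧ l + 3 - 2 ≤ j.1 ∧ j.1 - (l + 3 - 2) ≠ i.1 - (l + 3 - 3))
    then 1 else 0

noncomputable def u0 (l : ℕ) : Fin (l+3) → ℝ := fun i => if i.1 < l then 2 else 1

lemma hRB (l : ℕ) : BR l * (BR l)ᵀ = 1 + vecMulVec (u0 l) (u0 l) := by
  ext i i'
  rw [Matrix.mul_apply]
  set g : ℕ → ℝ := fun n =>
    (if (i.1 < l ∧ (n = i.1 ∨ l ≤ n)) ∨ (l ≤ i.1 ∧ (n = i.1 ∨ n = l+3)) then (1:ℝ) else 0) *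
    (if (i'.1 < l ∧ (n = i'.1 ∨ l ≤ n)) ∨ (l ≤ i'.1 ∧ (n = i'.1 ∨ n = l+3)) then (1:ℝ) else 0)
    with hg
  have h3 : l + 3 - 3 = l := by omega
  have hterm : ∀ j : Fin (l+3+1), BR l i j * ((BR l)ᵀ) j i' = g j.1 := by
    intro j
    simp only [BR, Matrix.transpose_apply, Matrix.of_apply, h3, hg]
  rw [Finset.sum_congr rfl (fun j _ => hterm j), Fin.sum_univ_eq_sum_range g (l+3+1)]
  rw [Finset.sum_range_succ, Finset.sum_range_succ, Finset.sum_range_succ, Finset.sum_range_succ]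
  have hmain : ∀ j ∈ Finset.range l, g j = if j = i.1 ∧ j = i'.1 then 1 else 0 := by
    intro j hj
    simp only [Finset.mem_range] at hj
    simp only [hg]
    split_ifs <;> first | (exfalso; omega) | norm_num
  have htail : ∀ n, l ≤ n → n ≤ l + 3 →
      g n = if (i.1 < l ∨ n = i.1 ∨ n = l+3) ∧ (i'.1 < l ∨ n = i'.1 ∨ n = l+3)
        then 1 else 0 := by
    intro n h1 h2
    simp only [hg]
    split_ifs <;> first | (exfalso; omega) | norm_num
  rw [Finset.sum_congr rfl hmain, sum_ind,
    htail l (by omega) (by omega), htail (l+1) (by omega) (by omega),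
    htail (l+2) (by omega) (by omega), htail (l+3) (by omega) (by omega)]
  simp only [Matrix.add_apply, Matrix.one_apply, vecMulVec_apply, u0, Fin.ext_iff,
    eq_false (show ¬(l = l+3) by omega), eq_false (show ¬(l+1 = l+3) by omega),
    eq_false (show ¬(l+2 = l+3) by omega), or_false, or_true, and_self, if_true]
  have hi3 := i.2
  have hi3' := i'.2
  split_ifs <;> first | (exfalso; omega) | norm_num

lemma hQB (l : ℕ) : BQ l * (BQ l)ᵀ = 1 + vecMulVec (u0 l) (u0 l) := by
  ext i i'
  rw [Matrix.mul_apply]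
  set g : ℕ → ℝ := fun n =>
    (if (i.1 < l ∧ (n = i.1 ∨ l ≤ n)) ∨ (l ≤ i.1 ∧ l + 1 ≤ n ∧ n - (l+1) ≠ i.1 - l)
      then (1:ℝ) else 0) *
    (if (i'.1 < l ∧ (n = i'.1 ∨ l ≤ n)) ∨ (l ≤ i'.1 ∧ l + 1 ≤ n ∧ n - (l+1) ≠ i'.1 - l)
      then (1:ℝ) else 0) with hg
  have h3 : l + 3 - 3 = l := by omega
  have h2 : l + 3 - 2 = l + 1 := by omega
  have hterm : ∀ j : Fin (l+3+1), BQ l i j * ((BQ l)ᵀ) j i' = g j.1 := by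
    intro j
    simp only [BQ, Matrix.transpose_apply, Matrix.of_apply, h3, h2, hg]
  rw [Finset.sum_congr rfl (fun j _ => hterm j), Fin.sum_univ_eq_sum_range g (l+3+1)]
  rw [Finset.sum_range_succ, Finset.sum_range_succ, Finset.sum_range_succ, Finset.sum_range_succ]
  have hmain : ∀ j ∈ Finset.range l, g j = if j = i.1 ∧ j = i'.1 then 1 else 0 := by
    intro j hj
    simp only [Finset.mem_range] at hj
    simp only [hg]
    split_ifs <;> first | (exfalso; omega) | norm_num
  have htail : ∀ n, l ≤ n → n ≤ l + 3 →
      g n = if (i.1 < l ∨ (l + 1 ≤ n ∧ n - (l+1) ≠ i.1 - l)) ∧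
        (i'.1 < l ∨ (l + 1 ≤ n ∧ n - (l+1) ≠ i'.1 - l)) then 1 else 0 := by
    intro n h1 hn2
    simp only [hg]
    split_ifs <;> first | (exfalso; omega) | norm_num
  rw [Finset.sum_congr rfl hmain, sum_ind,
    htail l (by omega) (by omega), htail (l+1) (by omega) (by omega),
    htail (l+2) (by omega) (by omega), htail (l+3) (by omega) (by omega)]
  simp only [Matrix.add_apply, Matrix.one_apply, vecMulVec_apply, u0, Fin.ext_iff,
    eq_false (show ¬(l + 1 ≤ l) by omega), false_and, or_false, and_false]
  have hi3 := i.2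
  have hi3' := i'.2
  split_ifs <;> first | (exfalso; omega) | norm_num

/-! ### full bipartite matrices including the `K₂` copies -/

noncomputable def NR (l : ℕ) :
    Matrix (Fin (l+3) ⊕ Fin (3*l)) (Fin (l+3+1) ⊕ Fin (3*l)) ℝ :=
  fromBlocks (BR l) 0 0 1

noncomputable def NQ (l : ℕ) :
    Matrix (Fin (l+3) ⊕ Fin (3*l)) (Fin (l+3+1) ⊕ Fin (3*l)) ℝ :=
  fromBlocks (BQ l) 0 0 1

noncomputable def uu (l : ℕ) : (Fin (l+3) ⊕ Fin (3*l)) → ℝ := Sum.elim (u0 l) 0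

lemma block_ext (l : ℕ) (B : Matrix (Fin (l+3)) (Fin (l+3+1)) ℝ)
    (hB : B * Bᵀ = 1 + vecMulVec (u0 l) (u0 l)) :
    (fromBlocks B 0 0 (1 : Matrix (Fin (3*l)) (Fin (3*l)) ℝ)) *
      (fromBlocks B 0 0 (1 : Matrix (Fin (3*l)) (Fin (3*l)) ℝ))ᵀ
      = 1 + vecMulVec (uu l) (uu l) := by
  rw [fromBlocks_transpose, fromBlocks_multiply]
  simp only [Matrix.mul_zero, Matrix.zero_mul, Matrix.mul_one, transpose_zero, transpose_one,
    add_zero, zero_add, Matrix.one_mul, hB]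
  ext (a|a) (b|b) <;>
    simp [Matrix.add_apply, Matrix.one_apply, vecMulVec_apply, uu, fromBlocks]

lemma hdotR (l : ℕ) : uu l ⬝ᵥ uu l = 4*(l:ℝ)+3 := by
  rw [dotProduct, Fintype.sum_sum_type]
  simp only [uu, Sum.elim_inl, Sum.elim_inr, Pi.zero_apply, mul_zero, Finset.sum_const_zero,
    add_zero, u0]
  rw [Fin.sum_univ_eq_sum_range
    (fun n => ((if n < l then (2:ℝ) else 1) * (if n < l then (2:ℝ) else 1))) (l+3)]
  rw [Finset.sum_range_succ, Finset.sum_range_succ, Finset.sum_range_succ]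
  have hconst : ∀ j ∈ Finset.range l,
      ((if j < l then (2:ℝ) else 1) * (if j < l then (2:ℝ) else 1)) = 4 := by
    intro j hj
    rw [if_pos (Finset.mem_range.mp hj)]
    norm_num
  rw [Finset.sum_congr rfl hconst, Finset.sum_const, Finset.card_range]
  simp only [if_neg (show ¬(l < l) by omega), if_neg (show ¬(l+1 < l) by omega),
    if_neg (show ¬(l+2 < l) by omega), nsmul_eq_mul]
  push_cast
  ring


/-! ### adjacency helpers -/

lemma bipGraph_adj {α β : Type*} (P : α → β → Prop) (x y : α ⊕ β) :
    (bipGraph P).Adj x y ↔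
      (∃ i j, x = Sum.inl i ∧ y = Sum.inr j ∧ P i j) ∨
      (∃ i j, y = Sum.inl i ∧ x = Sum.inr j ∧ P i j) := by
  rw [bipGraph, SimpleGraph.fromRel_adj]
  constructor
  · rintro ⟨-, h⟩; exact h
  · intro h
    refine ⟨?_, h⟩
    rcases h with ⟨i, j, rfl, rfl, -⟩ | ⟨i, j, rfl, rfl, -⟩ <;> simp

/-! ### reindexing equivalences -/

def eB (l : ℕ) : ((Fin (l+3) ⊕ Fin (3*l)) ⊕ (Fin (l+3+1) ⊕ Fin (3*l))) ≃
    ((Fin (l+3) ⊕ Fin (l+3+1)) ⊕ (Fin (3*l) × Fin 2)) where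
  toFun x := match x with
    | .inl (.inl i) => .inl (.inl i)
    | .inl (.inr a) => .inr (a, 0)
    | .inr (.inl j) => .inl (.inr j)
    | .inr (.inr a) => .inr (a, 1)
  invFun x := match x with
    | .inl (.inl i) => .inl (.inl i)
    | .inl (.inr j) => .inr (.inl j)
    | .inr (a, b) => if b = 0 then .inl (.inr a) else .inr (.inr a)
  left_inv := by rintro ((i|a)|(j|a)) <;> rfl
  right_inv := by
    rintro ((i|j)|⟨a,b⟩)
    · rfl
    · rfl
    · fin_cases b <;> rfl

def eS (K : ℕ) : (Fin K ⊕ (Unit ⊕ Fin K)) ≃ (Unit ⊕ (Fin K ⊕ Fin K)) where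
  toFun x := match x with
    | .inl i => .inr (.inl i)
    | .inr (.inl _) => .inl ()
    | .inr (.inr j) => .inr (.inr j)
  invFun x := match x with
    | .inl _ => .inr (.inl ())
    | .inr (.inl i) => .inl i
    | .inr (.inr j) => .inr (.inr j)
  left_inv := by rintro (i|(⟨⟩|j)) <;> rfl
  right_inv := by rintro (⟨⟩|(i|j)) <;> rfl

/-! ### the star side -/

noncomputable def NS (K : ℕ) : Matrix (Fin K) (Unit ⊕ Fin K) ℝ :=
  Matrix.of fun i c => Sum.elim (fun _ => (1:ℝ)) (fun j => if i = j then 1 else 0) c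

lemma hNS (K : ℕ) : NS K * (NS K)ᵀ
    = 1 + vecMulVec (fun _ : Fin K => (1:ℝ)) (fun _ : Fin K => (1:ℝ)) := by
  ext i i'
  rw [Matrix.mul_apply, Fintype.sum_sum_type]
  simp only [NS, Matrix.transpose_apply, Matrix.of_apply, Sum.elim_inl, Sum.elim_inr,
    mul_one, one_mul, ite_mul, zero_mul, mul_ite, mul_zero, Matrix.add_apply,
    Matrix.one_apply, vecMulVec_apply]
  rw [Finset.sum_ite_eq]
  simp [eq_comm]
  all_goals rw [add_comm]

lemma hdotS (K : ℕ) (l : ℕ) (h : K = 4*l+3) :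
    (fun _ : Fin K => (1:ℝ)) ⬝ᵥ (fun _ : Fin K => (1:ℝ)) = 4*(l:ℝ)+3 := by
  simp [dotProduct, h]
  all_goals push_cast
  all_goals ring

/-! ### adjacency matrices as block matrices -/

lemma adj_bip_union (l : ℕ) (P : Fin (l+3) → Fin (l+3+1) → Prop)
    (B : Matrix (Fin (l+3)) (Fin (l+3+1)) ℝ) (hB : ∀ i j, B i j = if P i j then 1 else 0)
    (G : SimpleGraph (Fin (l+3) ⊕ Fin (l+3+1))) (hG : G = bipGraph P) :
    adjMat (G ⊕g copiesK2 (3*l)) =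
      Matrix.reindex (eB l) (eB l)
        (fromBlocks 0 (fromBlocks B 0 0 1) (fromBlocks B 0 0 1)ᵀ 0) := by
  subst hG
  ext v w
  rcases v with (i|j)|⟨a,b⟩ <;> rcases w with (i'|j')|⟨a',b'⟩
  all_goals try fin_cases b
  all_goals try fin_cases b'
  all_goals
    simp [adjMat, Matrix.reindex_apply, Matrix.submatrix_apply, eB, SimpleGraph.sum_adj,
      bipGraph_adj, copiesK2, SimpleGraph.fromRel_adj, Prod.mk.injEq, Matrix.one_apply, hB,
      show ((0:Fin 2) = 1) ↔ False by decide, show ((1:Fin 2) = 0) ↔ False by decide,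
      eq_comm]

lemma adjS_eq (K : ℕ) : adjMat (starSubdiv K)
    = Matrix.reindex (eS K) (eS K) (fromBlocks 0 (NS K) (NS K)ᵀ 0) := by
  ext v w
  rcases v with ⟨⟩|(i|j) <;> rcases w with ⟨⟩|(i'|j')
  all_goals
    simp [adjMat, starSubdiv, SimpleGraph.fromRel_adj, eS, NS, Matrix.reindex_apply,
      Matrix.submatrix_apply, Matrix.one_apply, eq_comm]

/-! ### charpoly of the three graphs -/

lemma charR (l : ℕ) : (adjMat (Rgraph (l+3) ⊕g copiesK2 (3*l))).charpoly
    = X * (X^2-1)^(4*l+2) * (X^2 - 1 - C (4*(l:ℝ)+3)) := by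
  rw [adj_bip_union l
      (fun i j => (i.1 < l + 3 - 3 ∧ ((j.1 : ℕ) = i.1 ∨ l + 3 - 3 ≤ j.1)) ∨
        (l + 3 - 3 ≤ i.1 ∧ ((j.1 : ℕ) = i.1 ∨ j.1 = l + 3)))
      (BR l) (fun i j => by simp [BR]) (Rgraph (l+3)) rfl, Matrix.charpoly_reindex,
    bip_charpoly _ (uu l) (block_ext l (BR l) (hRB l)) (4*l+2)
      (by simp <;> omega) (by simp <;> omega), hdotR]

lemma charQ (l : ℕ) : (adjMat (Qgraph (l+3) ⊕g copiesK2 (3*l))).charpoly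
    = X * (X^2-1)^(4*l+2) * (X^2 - 1 - C (4*(l:ℝ)+3)) := by
  rw [adj_bip_union l
      (fun i j => (i.1 < l + 3 - 3 ∧ ((j.1 : ℕ) = i.1 ∨ l + 3 - 3 ≤ j.1)) ∨
        (l + 3 - 3 ≤ i.1 ∧ l + 3 - 2 ≤ j.1 ∧ j.1 - (l + 3 - 2) ≠ i.1 - (l + 3 - 3)))
      (BQ l) (fun i j => by simp [BQ]) (Qgraph (l+3)) rfl, Matrix.charpoly_reindex,
    bip_charpoly _ (uu l) (block_ext l (BQ l) (hQB l)) (4*l+2)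
      (by simp <;> omega) (by simp <;> omega), hdotR]

lemma charS (l : ℕ) : (adjMat (starSubdiv (4*l+3))).charpoly
    = X * (X^2-1)^(4*l+2) * (X^2 - 1 - C (4*(l:ℝ)+3)) := by
  rw [adjS_eq, Matrix.charpoly_reindex,
    bip_charpoly (NS (4*l+3)) (fun _ => 1) (hNS (4*l+3)) (4*l+2)
      (by simp <;> omega) (by simp <;> omega), hdotS (4*l+3) l rfl]

/-! ### connectivity -/

lemma star_reach (K : ℕ) : ∀ v, (starSubdiv K).Reachable (Sum.inl ()) v := by
  have hca : ∀ i : Fin K, (starSubdiv K).Adj (Sum.inl ()) (Sum.inr (Sum.inl i)) := by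
    intro i
    simp [starSubdiv, SimpleGraph.fromRel_adj]
  have hab : ∀ i : Fin K, (starSubdiv K).Adj (Sum.inr (Sum.inl i)) (Sum.inr (Sum.inr i)) := by
    intro i
    simp [starSubdiv, SimpleGraph.fromRel_adj]
  rintro (⟨⟩|(i|j))
  · exact SimpleGraph.Reachable.refl _
  · exact (hca i).reachable
  · exact ((hca j).reachable).trans (hab j).reachable

lemma sum_disconn {α β : Type*} (G : SimpleGraph α) (H : SimpleGraph β) (a : α) (b : β)
    (h : (G ⊕g H).Reachable (Sum.inl a) (Sum.inr b)) : False := by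
  have step : ∀ (x y : α ⊕ β), (G ⊕g H).Adj x y → x.isLeft = y.isLeft := by
    rintro (x|x) (y|y) hxy <;> simp_all [SimpleGraph.sum_adj]
  have hs : ∀ (x y : α ⊕ β) (_ : (G ⊕g H).Walk x y), x.isLeft = y.isLeft := by
    intro x y w
    induction w with
    | nil => rfl
    | cons h' p ih => exact (step _ _ h').trans ih
  obtain ⟨w⟩ := h
  simpa using hs _ _ w

lemma noIso {α β : Type*} [Fintype α] [Fintype β] (G : SimpleGraph α) (H : SimpleGraph β)
    (K : ℕ) (a : α) (b : β) (e : (G ⊕g H) ≃g starSubdiv K) : False := by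
  have h1 : (starSubdiv K).Reachable (e (Sum.inl a)) (e (Sum.inr b)) :=
    ((star_reach K _).symm.trans (star_reach K _))
  rw [SimpleGraph.Iso.reachable_iff] at h1
  exact sum_disconn G H a b h1

end Aux

/-- Part of Corollary 12 ... -/
theorem starSubdiv_cospectral_mates (l : ℕ) (hl : 1 ≤ l) :
    (adjMat (Rgraph (l + 3) ⊕g copiesK2 (3 * l))).charpoly =
        (adjMat (starSubdiv (4 * l + 3))).charpoly ∧
    (adjMat (Qgraph (l + 3) ⊕g copiesK2 (3 * l))).charpoly =
        (adjMat (starSubdiv (4 * l + 3))).charpoly ∧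
    (adjMat (Rgraph (l + 3) ⊕g copiesK2 (3 * l))).charpoly =
        (adjMat (Qgraph (l + 3) ⊕g copiesK2 (3 * l))).charpoly ∧
    ¬ Nonempty ((Rgraph (l + 3) ⊕g copiesK2 (3 * l)) ≃g starSubdiv (4 * l + 3)) ∧
    ¬ Nonempty ((Qgraph (l + 3) ⊕g copiesK2 (3 * l)) ≃g starSubdiv (4 * l + 3)) := by
  refine ⟨?_, ?_, ?_, ?_, ?_⟩
  · rw [charR l, charS l]
  · rw [charQ l, charS l]
  · rw [charR l, charQ l]
  · rintro ⟨e⟩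
    exact noIso _ _ _ (Sum.inl (⟨0, by omega⟩ : Fin (l+3)))
      ((⟨0, by omega⟩ : Fin (3*l)), (0 : Fin 2)) e
  · rintro ⟨e⟩
    exact noIso _ _ _ (Sum.inl (⟨0, by omega⟩ : Fin (l+3)))
      ((⟨0, by omega⟩ : Fin (3*l)), (0 : Fin 2)) e
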